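/- arXiv:2605.05024 — 4 statements merged into one kernel-verified Lean document; each statement's English description precedes it below -/
import Mathlib

section
/- Let L_V be a symmetric positive semidefinite n×n real matrix with eigenvalues λ₁,…,λₙ ≥ 0, and L_E a symmetric positive semidefinite m×m real matrix with eigenvalues μ₁,…,μ_m ≥ 0. Let Π_V and Π_E be the orthogonal projections onto ker(L_V) and ker(L_E) respectively, let Z₀ ∈ ℝ^{n×m}, and define Z_s := exp(−s·L_V)·Z₀·exp(−s·L_E). Suppose there exists at least one pair (i, j) with λᵢ + μⱼ > 0, and set η := min{λᵢ + μⱼ : λᵢ + μⱼ > 0} > 0. Then for all s ≥ 0, ‖Z_s − Π_V·Z₀·Π_E‖_F ≤ e^{−η·s}·‖Z₀‖_F; in particular Z_s → Π_V·Z₀·Π_E as s → ∞. -/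
open Matrix

/-- Frobenius trace form is invariant under orthogonal conjugation. -/
lemma frob_conj_aux {n m : ℕ} (U : Matrix (Fin n) (Fin n) ℝ) (V : Matrix (Fin m) (Fin m) ℝ)
    (hU : Uᵀ * U = 1) (hV : Vᵀ * V = 1) (A : Matrix (Fin n) (Fin m) ℝ) :
    ((U * A * Vᵀ)ᵀ * (U * A * Vᵀ)).trace = (Aᵀ * A).trace := by
  have h1 : (U * A * Vᵀ)ᵀ * (U * A * Vᵀ) = V * ((Aᵀ * A) * Vᵀ) := by
    rw [Matrix.transpose_mul, Matrix.transpose_mul, Matrix.transpose_transpose]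
    simp only [Matrix.mul_assoc]
    rw [show Uᵀ * (U * (A * Vᵀ)) = A * Vᵀ by rw [← Matrix.mul_assoc, hU, Matrix.one_mul]]
  rw [h1, Matrix.trace_mul_comm, Matrix.mul_assoc, hV, Matrix.mul_one]

lemma trace_transpose_mul_self {n m : ℕ} (A : Matrix (Fin n) (Fin m) ℝ) :
    (Aᵀ * A).trace = ∑ j, ∑ i, (A i j) ^ 2 := by
  simp [Matrix.trace, Matrix.mul_apply, Matrix.diag, sq]

lemma exp_conj_diag_aux {n : ℕ} (U : Matrix (Fin n) (Fin n) ℝ) (hU : Uᵀ * U = 1)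
    (lam : Fin n → ℝ) (s : ℝ) :
    NormedSpace.exp (-(s • (U * Matrix.diagonal lam * Uᵀ))) =
      U * Matrix.diagonal (fun i => Real.exp (-(s * lam i))) * Uᵀ := by
  have hU' : U * Uᵀ = 1 := mul_eq_one_comm.mp hU
  have hUunit : IsUnit U := ⟨⟨U, Uᵀ, hU', hU⟩, rfl⟩
  have hinv : U⁻¹ = Uᵀ := Matrix.inv_eq_right_inv hU'
  have h1 : -(s • (U * Matrix.diagonal lam * Uᵀ)) =
      U * Matrix.diagonal (fun i => -(s * lam i)) * U⁻¹ := by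
    rw [hinv]
    have h2 : Matrix.diagonal (fun i => -(s * lam i)) = -(s • Matrix.diagonal lam) := by
      ext i j
      by_cases h : i = j <;> simp [Matrix.diagonal, h]
    rw [h2]
    simp [Matrix.mul_smul, Matrix.smul_mul, Matrix.mul_neg, Matrix.neg_mul]
  rw [h1, Matrix.exp_conj U _ hUunit, Matrix.exp_diagonal, hinv]
  have h3 : (NormedSpace.exp fun i => -(s * lam i)) = fun i => Real.exp (-(s * lam i)) := by
    funext i; rw [Pi.coe_exp, ← Real.exp_eq_exp_ℝ]
  rw [h3]

/-- Pure-heat limit: for symmetric PSD `L_V = U Λ Uᵀ`, `L_E = V M Vᵀ` with nonnegative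
eigenvalues and spectral gap `η = min{λᵢ + μⱼ : λᵢ + μⱼ > 0}`, the two-sided heat flow
`Z_s = exp(-s L_V) Z₀ exp(-s L_E)` converges exponentially at rate `η` to `Π_V Z₀ Π_E`,
where `Π_V`, `Π_E` are the orthogonal projections onto the kernels:
`‖Z_s - Π_V Z₀ Π_E‖_F ≤ e^{-ηs} ‖Z₀‖_F`, and `Z_s → Π_V Z₀ Π_E` as `s → ∞`. -/
theorem heat_flow_pure_heat_limit {n m : ℕ}
    (LV U : Matrix (Fin n) (Fin n) ℝ) (lam : Fin n → ℝ)
    (LE V : Matrix (Fin m) (Fin m) ℝ) (mu : Fin m → ℝ)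
    (hU : Uᵀ * U = 1) (hV : Vᵀ * V = 1)
    (hLV : LV = U * Matrix.diagonal lam * Uᵀ)
    (hLE : LE = V * Matrix.diagonal mu * Vᵀ)
    (hlam : ∀ i, 0 ≤ lam i) (hmu : ∀ j, 0 ≤ mu j)
    (PV : Matrix (Fin n) (Fin n) ℝ)
    (hPV : PV = U * Matrix.diagonal (fun i => if lam i = 0 then (1 : ℝ) else 0) * Uᵀ)
    (PE : Matrix (Fin m) (Fin m) ℝ)
    (hPE : PE = V * Matrix.diagonal (fun j => if mu j = 0 then (1 : ℝ) else 0) * Vᵀ)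
    (η : ℝ)
    (hη : IsLeast {r : ℝ | (∃ i j, r = lam i + mu j) ∧ 0 < r} η)
    (Z₀ : Matrix (Fin n) (Fin m) ℝ)
    (Z : ℝ → Matrix (Fin n) (Fin m) ℝ)
    (hZ : ∀ s : ℝ, Z s =
      NormedSpace.exp (-(s • LV)) * Z₀ * NormedSpace.exp (-(s • LE))) :
    0 < η ∧
    (∀ s : ℝ, 0 ≤ s →
      Real.sqrt (((Z s - PV * Z₀ * PE)ᵀ * (Z s - PV * Z₀ * PE)).trace) ≤
        Real.exp (-(η * s)) * Real.sqrt ((Z₀ᵀ * Z₀).trace)) ∧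
    (∀ (i : Fin n) (j : Fin m),
      Filter.Tendsto (fun s => Z s i j) Filter.atTop (nhds ((PV * Z₀ * PE) i j))) := by
  obtain ⟨⟨⟨i₀, j₀, hηeq⟩, hηpos⟩, hηlb⟩ := hη
  have hU' : U * Uᵀ = 1 := mul_eq_one_comm.mp hU
  have hV' : V * Vᵀ = 1 := mul_eq_one_comm.mp hV
  set Y : Matrix (Fin n) (Fin m) ℝ := Uᵀ * Z₀ * V with hY
  set c : ℝ → Fin n → Fin m → ℝ := fun s i j =>
    Real.exp (-(s * (lam i + mu j))) -
      (if lam i = 0 then (1 : ℝ) else 0) * (if mu j = 0 then (1 : ℝ) else 0) with hc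
  set M : ℝ → Matrix (Fin n) (Fin m) ℝ := fun s => Matrix.of (fun i j => c s i j * Y i j)
    with hM
  have key : ∀ s, Z s - PV * Z₀ * PE = U * M s * Vᵀ := by
    intro s
    have hMs : M s =
        Matrix.diagonal (fun i => Real.exp (-(s * lam i))) * Y *
            Matrix.diagonal (fun j => Real.exp (-(s * mu j))) -
          Matrix.diagonal (fun i => if lam i = 0 then (1 : ℝ) else 0) * Y *
            Matrix.diagonal (fun j => if mu j = 0 then (1 : ℝ) else 0) := by
      ext i j
      simp only [hM, hc, Matrix.of_apply, Matrix.sub_apply, Matrix.diagonal_mul,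
        Matrix.mul_diagonal]
      rw [show -(s * (lam i + mu j)) = -(s * lam i) + -(s * mu j) by ring, Real.exp_add]
      ring
    rw [hZ, hLV, hLE, hPV, hPE, exp_conj_diag_aux U hU, exp_conj_diag_aux V hV, hMs]
    simp only [hY, Matrix.mul_sub, Matrix.sub_mul, Matrix.mul_assoc]
  have htr : ∀ s, ((Z s - PV * Z₀ * PE)ᵀ * (Z s - PV * Z₀ * PE)).trace =
      ∑ j, ∑ i, (c s i j * Y i j) ^ 2 := by
    intro s
    rw [key s, frob_conj_aux U V hU hV, trace_transpose_mul_self]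
    simp [hM]
  have htrZ0 : (Z₀ᵀ * Z₀).trace = ∑ j, ∑ i, (Y i j) ^ 2 := by
    have h := frob_conj_aux Uᵀ Vᵀ
      (by rw [Matrix.transpose_transpose]; exact hU')
      (by rw [Matrix.transpose_transpose]; exact hV') Z₀
    rw [Matrix.transpose_transpose] at h
    rw [← trace_transpose_mul_self, hY, ← h]
  have hc_bound : ∀ s : ℝ, 0 ≤ s → ∀ i j, (c s i j) ^ 2 ≤ (Real.exp (-(η * s))) ^ 2 := by
    intro s hs i j
    by_cases h : lam i + mu j = 0
    · have hli : lam i = 0 := by linarith [hlam i, hmu j]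
      have hmj : mu j = 0 := by linarith [hlam i, hmu j]
      have hcz : c s i j = 0 := by simp [hc, hli, hmj]
      rw [hcz]
      simpa using sq_nonneg (Real.exp (-(η * s)))
    · have hpos : 0 < lam i + mu j :=
        lt_of_le_of_ne (add_nonneg (hlam i) (hmu j)) (Ne.symm h)
      have hle : η ≤ lam i + mu j := hηlb ⟨⟨i, j, rfl⟩, hpos⟩
      have hci : c s i j = Real.exp (-(s * (lam i + mu j))) := by
        have hz : (if lam i = 0 then (1 : ℝ) else 0) * (if mu j = 0 then (1 : ℝ) else 0)
            = 0 := by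
          by_cases h1 : lam i = 0
          · by_cases h2 : mu j = 0
            · exact absurd (by rw [h1, h2]; ring) h
            · simp [h2]
          · simp [h1]
        simp only [hc]
        rw [hz, sub_zero]
      rw [hci]
      have hmono : Real.exp (-(s * (lam i + mu j))) ≤ Real.exp (-(η * s)) :=
        Real.exp_le_exp.mpr (by nlinarith)
      have hnn : 0 ≤ Real.exp (-(s * (lam i + mu j))) := (Real.exp_pos _).le
      exact pow_le_pow_left₀ hnn hmono 2
  have main : ∀ s : ℝ, 0 ≤ s →
      Real.sqrt (((Z s - PV * Z₀ * PE)ᵀ * (Z s - PV * Z₀ * PE)).trace) ≤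
        Real.exp (-(η * s)) * Real.sqrt ((Z₀ᵀ * Z₀).trace) := by
    intro s hs
    rw [htr s]
    have hsum : ∑ j, ∑ i, (c s i j * Y i j) ^ 2 ≤
        (Real.exp (-(η * s))) ^ 2 * ∑ j, ∑ i, (Y i j) ^ 2 := by
      rw [Finset.mul_sum]
      refine Finset.sum_le_sum fun j _ => ?_
      rw [Finset.mul_sum]
      refine Finset.sum_le_sum fun i _ => ?_
      rw [mul_pow]
      exact mul_le_mul_of_nonneg_right (hc_bound s hs i j) (sq_nonneg _)
    calc Real.sqrt (∑ j, ∑ i, (c s i j * Y i j) ^ 2)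
        ≤ Real.sqrt ((Real.exp (-(η * s))) ^ 2 * ∑ j, ∑ i, (Y i j) ^ 2) :=
          Real.sqrt_le_sqrt hsum
      _ = Real.exp (-(η * s)) * Real.sqrt (∑ j, ∑ i, (Y i j) ^ 2) := by
          rw [Real.sqrt_mul (sq_nonneg _), Real.sqrt_sq (Real.exp_pos _).le]
      _ = Real.exp (-(η * s)) * Real.sqrt ((Z₀ᵀ * Z₀).trace) := by rw [htrZ0]
  refine ⟨hηpos, main, fun i j => ?_⟩
  have hb : ∀ s : ℝ, 0 ≤ s → |Z s i j - (PV * Z₀ * PE) i j| ≤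
      Real.exp (-(η * s)) * Real.sqrt ((Z₀ᵀ * Z₀).trace) := by
    intro s hs
    have h1 : (Z s i j - (PV * Z₀ * PE) i j) ^ 2 ≤
        ((Z s - PV * Z₀ * PE)ᵀ * (Z s - PV * Z₀ * PE)).trace := by
      rw [trace_transpose_mul_self]
      have he : Z s i j - (PV * Z₀ * PE) i j = (Z s - PV * Z₀ * PE) i j := rfl
      rw [he]
      calc ((Z s - PV * Z₀ * PE) i j) ^ 2
          ≤ ∑ i', ((Z s - PV * Z₀ * PE) i' j) ^ 2 :=
            Finset.single_le_sum (f := fun i' => ((Z s - PV * Z₀ * PE) i' j) ^ 2)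
              (fun _ _ => sq_nonneg _) (Finset.mem_univ i)
        _ ≤ ∑ j', ∑ i', ((Z s - PV * Z₀ * PE) i' j') ^ 2 :=
            Finset.single_le_sum
              (f := fun j' => ∑ i', ((Z s - PV * Z₀ * PE) i' j') ^ 2)
              (fun _ _ => Finset.sum_nonneg fun _ _ => sq_nonneg _) (Finset.mem_univ j)
    calc |Z s i j - (PV * Z₀ * PE) i j|
        = Real.sqrt ((Z s i j - (PV * Z₀ * PE) i j) ^ 2) := (Real.sqrt_sq_eq_abs _).symm
      _ ≤ Real.sqrt (((Z s - PV * Z₀ * PE)ᵀ * (Z s - PV * Z₀ * PE)).trace) :=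
          Real.sqrt_le_sqrt h1
      _ ≤ Real.exp (-(η * s)) * Real.sqrt ((Z₀ᵀ * Z₀).trace) := main s hs
  have hlim : Filter.Tendsto
      (fun s => Real.exp (-(η * s)) * Real.sqrt ((Z₀ᵀ * Z₀).trace))
      Filter.atTop (nhds 0) := by
    have h1 : Filter.Tendsto (fun s : ℝ => η * s) Filter.atTop Filter.atTop :=
      Filter.Tendsto.const_mul_atTop hηpos Filter.tendsto_id
    have h2 : Filter.Tendsto (fun s : ℝ => Real.exp (-(η * s))) Filter.atTop (nhds 0) :=
      Real.tendsto_exp_neg_atTop_nhds_zero.comp h1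
    simpa using h2.mul_const (Real.sqrt ((Z₀ᵀ * Z₀).trace))
  have hzero : Filter.Tendsto (fun s => Z s i j - (PV * Z₀ * PE) i j)
      Filter.atTop (nhds 0) := by
    refine squeeze_zero_norm' ?_ hlim
    filter_upwards [Filter.eventually_ge_atTop (0 : ℝ)] with s hs
    simpa [Real.norm_eq_abs] using hb s hs
  have := hzero.add_const ((PV * Z₀ * PE) i j)
  simpa using this
end

section
/- Let S > 0, let u, v : [0, S] × ℝ^{n×m} → ℝ^{n×m} be continuous drift fields, and let Y, Z : [0, S] → ℝ^{n×m} be differentiable paths satisfying Y′(t) = u(t, Y(t)) and Z′(t) = v(t, Z(t)) for all t ∈ [0, S]. Suppose u admits a continuous one-sided Lipschitz constant κ : [0, S] → ℝ, i.e., ⟨X − X′, u(t, X) − u(t, X′)⟩_F ≤ κ(t)·‖X − X′‖_F² for all X, X′ ∈ ℝ^{n×m} and t ∈ [0, S]. Define Λ(t) := ∫₀ᵗ (2·κ(r) + 1) dr. Then for every t ∈ [0, S], ‖Y(t) − Z(t)‖_F² ≤ e^{Λ(t)} · ( ‖Y(0) − Z(0)‖_F² + ∫₀ᵗ e^{−Λ(r)}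 · ‖u(r, Z(r)) − v(r, Z(r))‖_F² dr ). -/
open Matrix

attribute [local instance] Matrix.frobeniusNormedAddCommGroup Matrix.frobeniusNormedSpace


noncomputable def matEv {n m : ℕ} (i : Fin n) (j : Fin m) :
    Matrix (Fin n) (Fin m) ℝ →L[ℝ] ℝ :=
  LinearMap.toContinuousLinearMap
    { toFun := fun X => X i j
      map_add' := fun _ _ => rfl
      map_smul' := fun _ _ => rfl }

lemma matEv_apply {n m : ℕ} (i : Fin n) (j : Fin m) (X : Matrix (Fin n) (Fin m) ℝ) :
    matEv i j X = X i j := rfl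

lemma trace_ip {n m : ℕ} (X Y : Matrix (Fin n) (Fin m) ℝ) :
    (Xᵀ * Y).trace = ∑ i, ∑ j, X i j * Y i j := by
  rw [Matrix.trace]
  simp only [Matrix.diag, Matrix.mul_apply, Matrix.transpose_apply]
  exact Finset.sum_comm

lemma entry_hasDerivAt {n m : ℕ} {W : ℝ → Matrix (Fin n) (Fin m) ℝ}
    {D : Matrix (Fin n) (Fin m) ℝ} {t : ℝ} (hW : HasDerivAt W D t)
    (i : Fin n) (j : Fin m) :
    HasDerivAt (fun s => W s i j) (D i j) t :=
  (matEv i j).hasFDerivAt.comp_hasDerivAt t hW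

lemma gronwall_aux (S : ℝ) (hS : 0 < S) (f φ ψ Λ : ℝ → ℝ)
    (hΛ : Λ = fun t => ∫ r in (0:ℝ)..t, f r)
    (hfc : ContinuousOn f (Set.Icc 0 S))
    (hφc : ContinuousOn φ (Set.Icc 0 S))
    (hψc : ContinuousOn ψ (Set.Icc 0 S))
    (hφd : ∀ t ∈ Set.Ioo (0:ℝ) S, ∃ d, HasDerivAt φ d t ∧ d ≤ f t * φ t + ψ t) :
    ∀ t ∈ Set.Icc (0:ℝ) S,
      φ t ≤ Real.exp (Λ t) * (φ 0 + ∫ r in (0:ℝ)..t, Real.exp (-Λ r) * ψ r) := by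
  have hΛ0 : Λ 0 = 0 := by rw [hΛ]; simp
  have hΛc : ContinuousOn Λ (Set.Icc 0 S) := by
    rw [hΛ]
    have h := intervalIntegral.continuousOn_primitive_interval (μ := MeasureTheory.volume)
      (a := (0:ℝ)) (b := S)
      (f := f) (by rw [Set.uIcc_of_le hS.le]; exact hfc.integrableOn_Icc)
    rwa [Set.uIcc_of_le hS.le] at h
  have hΛd : ∀ t ∈ Set.Ioo (0:ℝ) S, HasDerivAt Λ (f t) t := by
    intro t ht
    have hmem : Set.Icc (0:ℝ) S ∈ nhds t := Icc_mem_nhds ht.1 ht.2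
    rw [hΛ]
    refine intervalIntegral.integral_hasDerivAt_right ?_ ⟨_, hmem,
      hfc.aestronglyMeasurable measurableSet_Icc⟩ (hfc.continuousAt hmem)
    apply ContinuousOn.intervalIntegrable
    rw [Set.uIcc_of_le ht.1.le]
    exact hfc.mono (Set.Icc_subset_Icc le_rfl ht.2.le)
  set ψ' : ℝ → ℝ := fun r => Real.exp (-Λ r) * ψ r with hψ'def
  have hψ'c : ContinuousOn ψ' (Set.Icc 0 S) :=
    (Real.continuous_exp.comp_continuousOn hΛc.neg).mul hψc
  set I : ℝ → ℝ := fun t => ∫ r in (0:ℝ)..t, ψ' r with hIdef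
  have hIc : ContinuousOn I (Set.Icc 0 S) := by
    rw [hIdef]
    have h := intervalIntegral.continuousOn_primitive_interval (μ := MeasureTheory.volume)
      (a := (0:ℝ)) (b := S)
      (f := ψ') (by rw [Set.uIcc_of_le hS.le]; exact hψ'c.integrableOn_Icc)
    rwa [Set.uIcc_of_le hS.le] at h
  have hId : ∀ t ∈ Set.Ioo (0:ℝ) S, HasDerivAt I (ψ' t) t := by
    intro t ht
    have hmem : Set.Icc (0:ℝ) S ∈ nhds t := Icc_mem_nhds ht.1 ht.2
    refine intervalIntegral.integral_hasDerivAt_right ?_ ⟨_, hmem,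
      hψ'c.aestronglyMeasurable measurableSet_Icc⟩ (hψ'c.continuousAt hmem)
    apply ContinuousOn.intervalIntegrable
    rw [Set.uIcc_of_le ht.1.le]
    exact hψ'c.mono (Set.Icc_subset_Icc le_rfl ht.2.le)
  set g : ℝ → ℝ := fun t => Real.exp (-Λ t) * φ t - I t with hgdef
  have hgc : ContinuousOn g (Set.Icc 0 S) :=
    ((Real.continuous_exp.comp_continuousOn hΛc.neg).mul hφc).sub hIc
  have hgd : ∀ t ∈ Set.Ioo (0:ℝ) S, ∃ d, HasDerivAt g d t ∧ d ≤ 0 := by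
    intro t ht
    obtain ⟨d, hd, hdle⟩ := hφd t ht
    have hE : HasDerivAt (fun s => Real.exp (-Λ s)) (Real.exp (-Λ t) * (-f t)) t :=
      ((hΛd t ht).neg).exp
    refine ⟨_, (hE.mul hd).sub (hId t ht), ?_⟩
    have hEpos : (0:ℝ) < Real.exp (-Λ t) := Real.exp_pos _
    have := mul_le_mul_of_nonneg_left hdle hEpos.le
    simp only [hψ'def]
    nlinarith
  have hanti : AntitoneOn g (Set.Icc 0 S) := by
    refine antitoneOn_of_deriv_nonpos (convex_Icc 0 S) hgc ?_ ?_
    · intro x hx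
      rw [interior_Icc] at hx
      exact ((hgd x hx).choose_spec.1.differentiableAt).differentiableWithinAt
    · intro x hx
      rw [interior_Icc] at hx
      obtain ⟨d, hd, hle⟩ := hgd x hx
      rw [hd.deriv]; exact hle
  intro t ht
  have h1 : g t ≤ g 0 := hanti (Set.left_mem_Icc.2 hS.le) ht ht.1
  have hg0 : g 0 = φ 0 := by simp [hgdef, hIdef, hΛ0]
  have h2 : Real.exp (-Λ t) * φ t ≤ φ 0 + I t := by
    have := h1; rw [hg0] at this; simp only [hgdef] at this; linarith
  calc φ t = Real.exp (Λ t) * (Real.exp (-Λ t) * φ t) := by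
        rw [← mul_assoc, ← Real.exp_add]; simp
    _ ≤ Real.exp (Λ t) * (φ 0 + I t) :=
        mul_le_mul_of_nonneg_left h2 (Real.exp_pos _).le

/-- Deterministic pathwise one-sided-Lipschitz stability bound: if `Y' = u(t, Y)`,
`Z' = v(t, Z)` on `[0, S]`, `u` has a continuous one-sided Lipschitz constant `κ`, and
`Λ(t) = ∫₀ᵗ (2κ(r) + 1) dr`, then
`‖Y(t) - Z(t)‖_F² ≤ e^{Λ(t)} (‖Y(0) - Z(0)‖_F² + ∫₀ᵗ e^{-Λ(r)} ‖u(r,Z(r)) - v(r,Z(r))‖_F² dr)`.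
Frobenius squared norms are written as `trace (Xᵀ X)`. -/
theorem one_sided_lipschitz_stability {n m : ℕ}
    (S : ℝ) (hS : 0 < S)
    (u v : ℝ → Matrix (Fin n) (Fin m) ℝ → Matrix (Fin n) (Fin m) ℝ)
    (hu_cont : ContinuousOn (fun q : ℝ × Matrix (Fin n) (Fin m) ℝ => u q.1 q.2)
      (Set.Icc 0 S ×ˢ Set.univ))
    (hv_cont : ContinuousOn (fun q : ℝ × Matrix (Fin n) (Fin m) ℝ => v q.1 q.2)
      (Set.Icc 0 S ×ˢ Set.univ))
    (Y Z : ℝ → Matrix (Fin n) (Fin m) ℝ)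
    (hY : ∀ t ∈ Set.Icc (0 : ℝ) S, HasDerivAt Y (u t (Y t)) t)
    (hZ : ∀ t ∈ Set.Icc (0 : ℝ) S, HasDerivAt Z (v t (Z t)) t)
    (κ : ℝ → ℝ) (hκc : ContinuousOn κ (Set.Icc 0 S))
    (hκ : ∀ (X X' : Matrix (Fin n) (Fin m) ℝ), ∀ t ∈ Set.Icc (0 : ℝ) S,
      ((X - X')ᵀ * (u t X - u t X')).trace ≤ κ t * ((X - X')ᵀ * (X - X')).trace)
    (Λ : ℝ → ℝ) (hΛ : Λ = fun t => ∫ r in (0 : ℝ)..t, (2 * κ r + 1)) :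
    ∀ t ∈ Set.Icc (0 : ℝ) S,
      ((Y t - Z t)ᵀ * (Y t - Z t)).trace ≤
        Real.exp (Λ t) *
          (((Y 0 - Z 0)ᵀ * (Y 0 - Z 0)).trace +
            ∫ r in (0 : ℝ)..t, Real.exp (-Λ r) *
              ((u r (Z r) - v r (Z r))ᵀ * (u r (Z r) - v r (Z r))).trace) := by
  have hYc : ContinuousOn Y (Set.Icc 0 S) :=
    fun s hs => ((hY s hs).continuousAt).continuousWithinAt
  have hZc : ContinuousOn Z (Set.Icc 0 S) :=
    fun s hs => ((hZ s hs).continuousAt).continuousWithinAt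
  have hWc : ContinuousOn (fun s => Y s - Z s) (Set.Icc 0 S) := hYc.sub hZc
  have huZ : ContinuousOn (fun r => u r (Z r)) (Set.Icc 0 S) := by
    have := hu_cont.comp (continuousOn_id.prodMk hZc)
      (fun r hr => Set.mk_mem_prod hr (Set.mem_univ _))
    exact this
  have hvZ : ContinuousOn (fun r => v r (Z r)) (Set.Icc 0 S) := by
    have := hv_cont.comp (continuousOn_id.prodMk hZc)
      (fun r hr => Set.mk_mem_prod hr (Set.mem_univ _))
    exact this
  have hDc : ContinuousOn (fun r => u r (Z r) - v r (Z r)) (Set.Icc 0 S) := huZ.sub hvZ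
  -- continuity of φ and ψ
  have hφc : ContinuousOn (fun s => ((Y s - Z s)ᵀ * (Y s - Z s)).trace) (Set.Icc 0 S) := by
    simp only [trace_ip]
    refine continuousOn_finset_sum _ fun i _ => continuousOn_finset_sum _ fun j _ => ?_
    exact ((matEv i j).continuous.comp_continuousOn hWc).mul
      ((matEv i j).continuous.comp_continuousOn hWc)
  have hψc : ContinuousOn
      (fun r => ((u r (Z r) - v r (Z r))ᵀ * (u r (Z r) - v r (Z r))).trace) (Set.Icc 0 S) := by
    simp only [trace_ip]
    refine continuousOn_finset_sum _ fun i _ => continuousOn_finset_sum _ fun j _ => ?_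
    exact ((matEv i j).continuous.comp_continuousOn hDc).mul
      ((matEv i j).continuous.comp_continuousOn hDc)
  have hfc : ContinuousOn (fun r => 2 * κ r + 1) (Set.Icc 0 S) :=
    (continuousOn_const.mul hκc).add continuousOn_const
  -- the differential inequality
  have hφd : ∀ t ∈ Set.Ioo (0:ℝ) S, ∃ d,
      HasDerivAt (fun s => ((Y s - Z s)ᵀ * (Y s - Z s)).trace) d t ∧
      d ≤ (2 * κ t + 1) * ((Y t - Z t)ᵀ * (Y t - Z t)).trace +
        ((u t (Z t) - v t (Z t))ᵀ * (u t (Z t) - v t (Z t))).trace := by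
    intro t ht
    have ht' : t ∈ Set.Icc (0:ℝ) S := Set.Ioo_subset_Icc_self ht
    have hW : HasDerivAt (fun s => Y s - Z s) (u t (Y t) - v t (Z t)) t :=
      (hY t ht').sub (hZ t ht')
    have hent := entry_hasDerivAt hW
    set W := Y t - Z t with hWdef
    set G := u t (Y t) - v t (Z t) with hGdef
    set A := u t (Y t) - u t (Z t) with hAdef
    set D := u t (Z t) - v t (Z t) with hDdef
    refine ⟨∑ i, ∑ j, (G i j * W i j + W i j * G i j), ?_, ?_⟩
    · have hfun : (fun s => ((Y s - Z s)ᵀ * (Y s - Z s)).trace)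
          = fun s => ∑ i, ∑ j, (Y s - Z s) i j * (Y s - Z s) i j :=
        funext fun s => trace_ip _ _
      rw [hfun]
      exact HasDerivAt.fun_sum fun i _ => HasDerivAt.fun_sum fun j _ => (hent i j).mul (hent i j)
    · have hGsplit : ∀ i j, G i j = A i j + D i j := by
        intro i j
        simp only [hGdef, hAdef, hDdef, Matrix.sub_apply, Matrix.add_apply]
        ring
      have hA : (∑ i, ∑ j, W i j * A i j) ≤ κ t * ∑ i, ∑ j, W i j * W i j := by
        have := hκ (Y t) (Z t) t ht'
        rwa [trace_ip, trace_ip] at this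
      have hB : 2 * (∑ i, ∑ j, W i j * D i j)
          ≤ (∑ i, ∑ j, W i j * W i j) + ∑ i, ∑ j, D i j * D i j := by
        rw [Finset.mul_sum, ← Finset.sum_add_distrib]
        refine Finset.sum_le_sum fun i _ => ?_
        rw [Finset.mul_sum, ← Finset.sum_add_distrib]
        refine Finset.sum_le_sum fun j _ => ?_
        nlinarith [sq_nonneg (W i j - D i j)]
      have hsplit : (∑ i, ∑ j, (G i j * W i j + W i j * G i j))
          = 2 * (∑ i, ∑ j, W i j * A i j) + 2 * (∑ i, ∑ j, W i j * D i j) := by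
        simp only [Finset.mul_sum, ← Finset.sum_add_distrib]
        refine Finset.sum_congr rfl fun i _ => ?_
        refine Finset.sum_congr rfl fun j _ => ?_
        rw [hGsplit i j]; ring
      rw [trace_ip, trace_ip, hsplit]
      nlinarith
  exact gronwall_aux S hS (fun r => 2 * κ r + 1)
    (fun s => ((Y s - Z s)ᵀ * (Y s - Z s)).trace)
    (fun r => ((u r (Z r) - v r (Z r))ᵀ * (u r (Z r) - v r (Z r))).trace)
    Λ hΛ hfc hφc hψc hφd
end

section
/- Let H ∈ {0,1}^{n×m} be a binary matrix with every column sum strictly positive, and let P ∈ ℝ^{n×n}, Q ∈ ℝ^{m×m} be permutation matrices. Define D_E(H) := diag(Hᵀ·𝟙_n), A_E(H) := offdiag(D_E(H)^{−1/2}·Hᵀ·H·D_E(H)^{−1/2}) where offdiag sets diagonal entries to zero, D_ov(H) := diag(A_E(H)·𝟙_m) with inverse square root taken entrywise with zero assigned to zero diagonal entries, and L_E(H) := I_m − D_ov(H)^{−1/2}·A_E(H)·D_ov(H)^{−1/2}. Then both operators transform equivariantly: A_E(P·H·Qᵀ) = Q·A_E(H)·Qᵀ and L_E(P·H·Qᵀ)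 = Q·L_E(H)·Qᵀ. -/
open Matrix

lemma perm_conj_apply {m : ℕ} (τ : Equiv.Perm (Fin m)) (M : Matrix (Fin m) (Fin m) ℝ) :
    τ.permMatrix ℝ * M * (τ.permMatrix ℝ)ᵀ = M.submatrix τ τ := by
  have h1 : (τ.permMatrix ℝ)ᵀ = (τ.symm.toPEquiv.toMatrix : Matrix (Fin m) (Fin m) ℝ) := by
    rw [Equiv.toPEquiv_symm, PEquiv.toMatrix_symm]
  rw [h1]
  show τ.toPEquiv.toMatrix * M * _ = _
  rw [PEquiv.toMatrix_toPEquiv_mul, PEquiv.mul_toMatrix_toPEquiv]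
  ext j k
  simp [Matrix.submatrix]

/-- Equivariance of the size-normalised overlap matrix
`A_E(H) = offdiag(D_E(H)^{-1/2} Hᵀ H D_E(H)^{-1/2})` and the normalised hyperedge-overlap
Laplacian `L_E(H) = I - D_ov(H)^{-1/2} A_E(H) D_ov(H)^{-1/2}` under independent row and column
permutations: `A_E(P H Qᵀ) = Q A_E(H) Qᵀ` and `L_E(P H Qᵀ) = Q L_E(H) Qᵀ`. -/
theorem overlap_laplacian_equivariant {n m : ℕ}
    (H : Matrix (Fin n) (Fin m) ℝ)
    (hbin : ∀ i j, H i j = 0 ∨ H i j = 1)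
    (hcol : ∀ j, 0 < ∑ i, H i j)
    (σ : Equiv.Perm (Fin n)) (τ : Equiv.Perm (Fin m))
    (P : Matrix (Fin n) (Fin n) ℝ) (Q : Matrix (Fin m) (Fin m) ℝ)
    (hP : P = σ.permMatrix ℝ) (hQ : Q = τ.permMatrix ℝ)
    (AE : Matrix (Fin n) (Fin m) ℝ → Matrix (Fin m) (Fin m) ℝ)
    (hAE : ∀ A : Matrix (Fin n) (Fin m) ℝ,
      AE A = Matrix.of (fun j k =>
        if j = k then 0 else
          (Matrix.diagonal (fun j => 1 / Real.sqrt (∑ i, A i j)) * (Aᵀ * A) *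
            Matrix.diagonal (fun j => 1 / Real.sqrt (∑ i, A i j))) j k))
    (LE : Matrix (Fin n) (Fin m) ℝ → Matrix (Fin m) (Fin m) ℝ)
    (hLE : ∀ A : Matrix (Fin n) (Fin m) ℝ,
      LE A = 1 -
        Matrix.diagonal (fun j =>
            if 0 < ∑ k, AE A j k then 1 / Real.sqrt (∑ k, AE A j k) else 0) * AE A *
          Matrix.diagonal (fun j =>
            if 0 < ∑ k, AE A j k then 1 / Real.sqrt (∑ k, AE A j k) else 0)) :
    AE (P * H * Qᵀ) = Q * AE H * Qᵀ ∧ LE (P * H * Qᵀ) = Q * LE H * Qᵀ := by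
  subst hP; subst hQ
  set P := σ.permMatrix ℝ with hP
  set Q := τ.permMatrix ℝ with hQ
  have hQT : Qᵀ = (τ.symm.toPEquiv.toMatrix : Matrix (Fin m) (Fin m) ℝ) := by
    rw [hQ, Equiv.toPEquiv_symm, PEquiv.toMatrix_symm]
  have hH' : P * H * Qᵀ = H.submatrix σ τ := by
    rw [hQT, hP]
    show σ.toPEquiv.toMatrix * H * _ = _
    rw [PEquiv.toMatrix_toPEquiv_mul, PEquiv.mul_toMatrix_toPEquiv]
    ext i j; simp
  have key : ∀ j k, AE (H.submatrix σ τ) j k = AE H (τ j) (τ k) := by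
    intro j k
    rw [hAE, hAE]
    simp only [Matrix.of_apply, EmbeddingLike.apply_eq_iff_eq]
    by_cases h : j = k
    · simp [h]
    · simp only [h, if_false]
      simp only [Matrix.mul_diagonal, Matrix.diagonal_mul]
      simp only [Matrix.mul_apply, Matrix.transpose_apply, Matrix.submatrix_apply]
      rw [show (∑ i, H (σ i) (τ j)) = ∑ i, H i (τ j) from Equiv.sum_comp σ (fun i => H i (τ j)),
        show (∑ i, H (σ i) (τ k)) = ∑ i, H i (τ k) from Equiv.sum_comp σ (fun i => H i (τ k)),
        show (∑ i, H (σ i) (τ j) * H (σ i) (τ k)) = ∑ i, H i (τ j) * H i (τ k) from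
          Equiv.sum_comp σ (fun i => H i (τ j) * H i (τ k))]
  have hA : AE (P * H * Qᵀ) = Q * AE H * Qᵀ := by
    rw [hH', hQ, perm_conj_apply]
    ext j k
    exact key j k
  refine ⟨hA, ?_⟩
  have hsum : ∀ j, (∑ k, AE (P * H * Qᵀ) j k) = ∑ k, AE H (τ j) k := by
    intro j
    rw [hH']
    calc (∑ k, AE (H.submatrix σ τ) j k) = ∑ k, AE H (τ j) (τ k) := by
          exact Finset.sum_congr rfl fun k _ => key j k
      _ = ∑ k, AE H (τ j) k := Equiv.sum_comp τ (fun k => AE H (τ j) k)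
  rw [hLE (P * H * Qᵀ), hLE H, hQ, perm_conj_apply]
  ext j k
  simp only [Matrix.sub_apply, Matrix.submatrix_apply, Matrix.mul_diagonal,
    Matrix.diagonal_mul, Matrix.one_apply, EmbeddingLike.apply_eq_iff_eq, hsum]
  rw [hH', key j k]
  simp only [← hH', hsum]
end

section
/- Let P ∈ ℝ^{n×n} and Q ∈ ℝ^{m×m} be permutation matrices, let σ be a permutation of {1, …, N}, let p₁, …, p_N : ℝ^{n×m} → ℝ be strictly positive functions, and let u₁, …, u_N : ℝ^{n×m} → ℝ^{n×m} be drift fields, satisfying the compatibility relations p_i(P·X·Qᵀ) = p_{σ(i)}(X) and u_i(P·X·Qᵀ) = P·u_{σ(i)}(X)·Qᵀ for all i and all X ∈ ℝ^{n×m}. Define the marginal density p̂(X) := (1/N)·Σ_{i=1}^N p_i(X), the posterior weights π_i(X) := p_i(X) / Σ_{j=1}^N p_j(X), and the posterior-averaged drift û(X) := Σ_{i=1}^N π_i(X)·u_i(X). Then: (i) p̂ is invariant, p̂(P·X·Qᵀ) = p̂(X) for all X; and (ii) û is equivariant, û(P·X·Qᵀ) = P·û(X)·Qᵀ for all X. 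-/
open Matrix

/-- Equivariance of the posterior-averaged drift: if the densities and drift fields satisfy
`p_i(P X Qᵀ) = p_{σ(i)}(X)` and `u_i(P X Qᵀ) = P u_{σ(i)}(X) Qᵀ` for a permutation `σ` of the
data index, then the marginal `p̂ = (1/N) Σᵢ pᵢ` is invariant, `p̂(P X Qᵀ) = p̂(X)`, and the
posterior-averaged drift `û(X) = Σᵢ πᵢ(X) uᵢ(X)` is equivariant, `û(P X Qᵀ) = P û(X) Qᵀ`. -/
theorem posterior_averaged_drift_equivariant {n m N : ℕ}
    (ρ : Equiv.Perm (Fin n)) (ν : Equiv.Perm (Fin m))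
    (P : Matrix (Fin n) (Fin n) ℝ) (Q : Matrix (Fin m) (Fin m) ℝ)
    (hP : P = ρ.permMatrix ℝ) (hQ : Q = ν.permMatrix ℝ)
    (σ : Equiv.Perm (Fin N))
    (p : Fin N → Matrix (Fin n) (Fin m) ℝ → ℝ)
    (hpos : ∀ i X, 0 < p i X)
    (u : Fin N → Matrix (Fin n) (Fin m) ℝ → Matrix (Fin n) (Fin m) ℝ)
    (hpcompat : ∀ i X, p i (P * X * Qᵀ) = p (σ i) X)
    (hucompat : ∀ i X, u i (P * X * Qᵀ) = P * u (σ i) X * Qᵀ)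
    (phat : Matrix (Fin n) (Fin m) ℝ → ℝ)
    (hphat : phat = fun X => (1 / (N : ℝ)) * ∑ i, p i X)
    (uhat : Matrix (Fin n) (Fin m) ℝ → Matrix (Fin n) (Fin m) ℝ)
    (huhat : uhat = fun X => ∑ i, (p i X / ∑ j, p j X) • u i X) :
    (∀ X, phat (P * X * Qᵀ) = phat X) ∧
    (∀ X, uhat (P * X * Qᵀ) = P * uhat X * Qᵀ) := by
  have hsum : ∀ X, (∑ i, p i (P * X * Qᵀ)) = ∑ i, p i X := by
    intro X
    rw [show (∑ i, p i (P * X * Qᵀ)) = ∑ i, p (σ i) X from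
      Finset.sum_congr rfl fun i _ => hpcompat i X]
    exact Equiv.sum_comp σ fun i => p i X
  constructor
  · intro X
    simp only [hphat, hsum]
  · intro X
    simp only [huhat]
    calc (∑ i, (p i (P*X*Qᵀ) / ∑ j, p j (P*X*Qᵀ)) • u i (P*X*Qᵀ))
        = ∑ i, (p (σ i) X / ∑ j, p j X) • (P * u (σ i) X * Qᵀ) := by
          refine Finset.sum_congr rfl fun i _ => ?_
          rw [hpcompat, hucompat, hsum]
      _ = ∑ i, (p i X / ∑ j, p j X) • (P * u i X * Qᵀ) :=
          Equiv.sum_comp σ fun i => (p i X / ∑ j, p j X) • (P * u i X * Qᵀ)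
      _ = P * (∑ i, (p i X / ∑ j, p j X) • u i X) * Qᵀ := by
          rw [Matrix.mul_sum, Matrix.sum_mul]
          refine Finset.sum_congr rfl fun i _ => ?_
          rw [Matrix.mul_smul, Matrix.smul_mul]
end
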